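/- Let λ > 1, α ∈ ℝ, and let g, 𝔭, ψ, η : 𝕋 → ℝ be continuous with g > 0, 0 < 𝔭 < 1, ψ satisfying ∫_𝕋 (g(x)η(x)/𝔭(x)) ψ(x) dx = 0, and η satisfying λ^{−1} η(x+α) − η(x) = 1/g(x). Let κ(x) = Σ_{k=0}^∞ λ^{−k} g(x−kα)ψ(x−kα)/𝔭(x−kα). Then ∫_𝕋 κ(x)/g(x) dx = 0. -/

import Mathlib

open Function MeasureTheory Filter

/-- If `ψ` is centered with respect to the invariant density `gη/𝔭` and `η` solves
`λ⁻¹η(x+α) - η(x) = 1/g(x)`, then `∫ κ(x)/g(x) dx = 0` where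
`κ(x) = Σ_{k≥0} λ^{-k} g(x-kα)ψ(x-kα)/𝔭(x-kα)`. -/
theorem kappa_integral_zero (α : ℝ) (lam : ℝ) (hlam : 1 < lam)
    (g 𝔭 ψ η : AddCircle (1 : ℝ) → ℝ)
    (hgcont : Continuous g) (h𝔭cont : Continuous 𝔭) (hψcont : Continuous ψ)
    (hηcont : Continuous η)
    (hgpos : ∀ x, 0 < g x) (h𝔭 : ∀ x, 0 < 𝔭 x ∧ 𝔭 x < 1)
    (hψ : ∫ x : AddCircle (1 : ℝ), (g x * η x / 𝔭 x) * ψ x = 0)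
    (hη : ∀ x, lam⁻¹ * η (x + α) - η x = 1 / g x) :
    ∫ x : AddCircle (1 : ℝ),
        (∑' k : ℕ, lam ^ (-(k : ℤ)) * g (x - k • (α : AddCircle (1 : ℝ)))
            * ψ (x - k • (α : AddCircle (1 : ℝ)))
            / 𝔭 (x - k • (α : AddCircle (1 : ℝ)))) / g x = 0 := by
  have hlam0 : (0:ℝ) < lam := lt_trans zero_lt_one hlam
  have hli : lam⁻¹ < 1 := inv_lt_one_of_one_lt₀ hlam
  have hli0 : (0:ℝ) ≤ lam⁻¹ := inv_nonneg.2 hlam0.le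
  have h𝔭ne : ∀ x, 𝔭 x ≠ 0 := fun x => (h𝔭 x).1.ne'
  have hgne : ∀ x, g x ≠ 0 := fun x => (hgpos x).ne'
  set F : AddCircle (1:ℝ) → ℝ := fun x => g x * ψ x / 𝔭 x with hF
  have hFcont : Continuous F := (hgcont.mul hψcont).div h𝔭cont h𝔭ne
  have hginv : Continuous fun x => (g x)⁻¹ := hgcont.inv₀ hgne
  -- integrability of continuous functions
  have hint : ∀ f : AddCircle (1:ℝ) → ℝ, Continuous f → Integrable f :=
    fun f hf => hf.integrable_of_hasCompactSupport (HasCompactSupport.of_compactSpace f)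
  -- translation continuity
  have htr : ∀ c : AddCircle (1:ℝ), Continuous fun x : AddCircle (1:ℝ) => x - c :=
    fun c => continuous_id.sub continuous_const
  -- bounds
  have hbd : ∀ f : AddCircle (1:ℝ) → ℝ, Continuous f → ∃ C, ∀ x, |f x| ≤ C := by
    intro f hf
    obtain ⟨x0, -, hx0⟩ := isCompact_univ.exists_isMaxOn Set.univ_nonempty hf.abs.continuousOn
    exact ⟨|f x0|, fun x => hx0 (Set.mem_univ x)⟩
  obtain ⟨CF, hCF⟩ := hbd F hFcont
  obtain ⟨CG, hCG⟩ := hbd _ hginv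
  obtain ⟨Cη, hCη⟩ := hbd η hηcont
  have hCF0 : 0 ≤ CF := le_trans (abs_nonneg _) (hCF 0)
  have hCG0 : 0 ≤ CG := le_trans (abs_nonneg _) (hCG 0)
  have hCη0 : 0 ≤ Cη := le_trans (abs_nonneg _) (hCη 0)
  set αc : AddCircle (1:ℝ) := (α : AddCircle (1:ℝ)) with hαc
  set f : ℕ → AddCircle (1:ℝ) → ℝ := fun k x =>
    lam ^ (-(k : ℤ)) * g (x - k • αc) * ψ (x - k • αc) / 𝔭 (x - k • αc) / g x with hf
  have hzpow : ∀ k : ℕ, lam ^ (-(k : ℤ)) = (lam⁻¹) ^ k := by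
    intro k
    rw [zpow_neg, zpow_natCast, inv_pow]
  have hzpow0 : ∀ k : ℕ, 0 < lam ^ (-(k : ℤ)) := fun k => zpow_pos hlam0 _
  have hfcont : ∀ k, Continuous (f k) :=
    fun k => (((continuous_const.mul (hgcont.comp (htr _))).mul
      (hψcont.comp (htr _))).div (h𝔭cont.comp (htr _)) (fun x => h𝔭ne _)).div hgcont hgne
  have hfint : ∀ k, Integrable (f k) := fun k => hint _ (hfcont k)
  -- rewrite f k x
  have hfeq : ∀ k x, f k x = lam ^ (-(k : ℤ)) * (F (x - k • αc) * (g x)⁻¹) := by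
    intro k x
    simp only [hf, hF, div_eq_mul_inv]
    ring
  -- pointwise norm bound
  have hfbd : ∀ k x, ‖f k x‖ ≤ (lam⁻¹) ^ k * (CF * CG) := by
    intro k x
    rw [hfeq, Real.norm_eq_abs, abs_mul, abs_mul, abs_of_pos (hzpow0 k), hzpow]
    exact mul_le_mul_of_nonneg_left
      (mul_le_mul (hCF _) (hCG _) (abs_nonneg _) hCF0) (pow_nonneg hli0 k)
  -- norm integral bound & summability
  have hnormint : ∀ k, (∫ x, ‖f k x‖) ≤ (lam⁻¹) ^ k * (CF * CG) *
      (volume (Set.univ : Set (AddCircle (1:ℝ)))).toReal := by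
    intro k
    calc (∫ x, ‖f k x‖) ≤ ∫ _x : AddCircle (1:ℝ), (lam⁻¹) ^ k * (CF * CG) := by
          apply integral_mono ((hfint k).norm) (integrable_const _) (fun x => hfbd k x)
      _ = _ := by rw [integral_const, smul_eq_mul, mul_comm]; rfl
  have hsumnorm : Summable fun k => ∫ x, ‖f k x‖ := by
    apply Summable.of_nonneg_of_le (fun k => integral_nonneg fun x => norm_nonneg _) hnormint
    exact ((summable_geometric_of_lt_one hli0 hli).mul_right _).mul_right _
  -- swap sum and integral
  have hswap : ∑' k, (∫ x, f k x) = ∫ x, (∑' k, f k x) :=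
    integral_tsum_of_summable_integral_norm hfint hsumnorm
  -- telescoping quantities
  set a : ℕ → ℝ := fun k => ∫ x, F (x - k • αc) * η x with ha
  set b : ℕ → ℝ := fun k => lam ^ (-(k : ℤ)) * a k with hb
  have haint : ∀ k : ℕ, Integrable fun x => F (x - k • αc) * η x := fun k =>
    hint _ (((hFcont.comp (htr (k • αc))) : Continuous fun x => F (x - k • αc)).mul hηcont)
  have haint' : ∀ k : ℕ, Integrable fun x => F (x - k • αc) * η (x + αc) := fun k =>
    hint _ (((hFcont.comp (htr (k • αc))) : Continuous fun x => F (x - k • αc)).mul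
      ((hηcont.comp (continuous_id.add continuous_const) : Continuous fun x => η (x + αc))))
  -- each integral telescopes
  have hkey : ∀ k, (∫ x, f k x) = b (k + 1) - b k := by
    intro k
    have h1 : ∀ x, f k x = lam ^ (-((k:ℤ) + 1)) * (F (x - k • αc) * η (x + αc))
        - lam ^ (-(k : ℤ)) * (F (x - k • αc) * η x) := by
      intro x
      have h2 : (g x)⁻¹ = lam⁻¹ * η (x + αc) - η x := by
        rw [← one_div]
        exact (hη x).symm
      rw [hfeq k x, h2]
      have h4 : lam ^ (-((k:ℤ) + 1)) = lam ^ (-(k:ℤ)) * lam⁻¹ := by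
        rw [neg_add, zpow_add₀ hlam0.ne', zpow_neg_one]
      rw [h4]
      ring
    calc (∫ x, f k x)
        = ∫ x, (lam ^ (-((k:ℤ) + 1)) * (F (x - k • αc) * η (x + αc))
            - lam ^ (-(k : ℤ)) * (F (x - k • αc) * η x)) := by
          exact integral_congr_ae (Filter.Eventually.of_forall h1)
      _ = lam ^ (-((k:ℤ) + 1)) * (∫ x, F (x - k • αc) * η (x + αc))
            - lam ^ (-(k : ℤ)) * (∫ x, F (x - k • αc) * η x) := by
          rw [integral_sub ((haint' k).const_mul _) ((haint k).const_mul _),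
            integral_const_mul, integral_const_mul]
      _ = b (k + 1) - b k := by
          have htrans : (∫ x, F (x - k • αc) * η (x + αc)) = a (k + 1) := by
            have h4 := integral_add_right_eq_self (μ := (volume : Measure (AddCircle (1:ℝ))))
              (fun x => F (x - k • αc) * η (x + αc)) (-αc)
            rw [← h4, ha]
            apply integral_congr_ae (Filter.Eventually.of_forall fun x => ?_)
            have h5 : x + -αc - k • αc = x - (k+1) • αc := by
              rw [succ_nsmul]
              abel
            have h6 : x + -αc + αc = x := by abel
            rw [h5, h6]
          rw [htrans]
          show _ = lam ^ (-((k + 1 : ℕ) : ℤ)) * a (k + 1) - lam ^ (-(k : ℤ)) * a k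
          have h9 : (-((k + 1 : ℕ) : ℤ)) = -((k : ℤ) + 1) := by push_cast; ring
          rw [h9]
  -- b tends to 0
  have hbbd : ∀ k, |b k| ≤ (lam⁻¹) ^ k * (CF * Cη *
      (volume (Set.univ : Set (AddCircle (1:ℝ)))).toReal) := by
    intro k
    rw [hb, abs_mul, abs_of_pos (hzpow0 k), hzpow]
    refine mul_le_mul_of_nonneg_left ?_ (pow_nonneg hli0 k)
    calc |a k| ≤ ∫ x, |F (x - k • αc)| * |η x| := by
          simpa [Real.norm_eq_abs] using
            norm_integral_le_integral_norm (μ := volume) (fun x => F (x - k • αc) * η x)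
      _ ≤ ∫ _x : AddCircle (1:ℝ), CF * Cη := by
          apply integral_mono (hint _ ((((hFcont.comp (htr (k • αc))) :
              Continuous fun x => F (x - k • αc)).abs).mul hηcont.abs))
            (integrable_const _) fun x => ?_
          exact mul_le_mul (hCF _) (hCη _) (abs_nonneg _) hCF0
      _ = _ := by rw [integral_const, smul_eq_mul, mul_comm]; rfl
  have hb0 : Tendsto b atTop (nhds 0) := by
    apply squeeze_zero_norm hbbd
    have := (tendsto_pow_atTop_nhds_zero_of_lt_one hli0 hli).mul_const
      (CF * Cη * (volume (Set.univ : Set (AddCircle (1:ℝ)))).toReal)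
    simpa using this
  -- b 0 = 0
  have hb0eq : b 0 = 0 := by
    rw [hb, ha]
    simp only [Nat.cast_zero, neg_zero, zpow_zero, one_mul, zero_smul, sub_zero]
    rw [← hψ]
    apply integral_congr_ae (Filter.Eventually.of_forall fun x => ?_)
    rw [hF]
    ring
  -- summability of integrals
  have hsumf : Summable fun k => ∫ x, f k x :=
    Summable.of_norm_bounded hsumnorm fun k => norm_integral_le_integral_norm _
  -- tsum of telescoping
  have htsum : ∑' k, (∫ x, f k x) = 0 := by
    have h7 := hsumf.hasSum.tendsto_sum_nat
    have h8 : (fun n => ∑ i ∈ Finset.range n, ∫ x, f i x) = fun n => b n - b 0 := by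
      funext n
      rw [← Finset.sum_range_sub b n]
      exact Finset.sum_congr rfl fun i _ => hkey i
    rw [h8] at h7
    have h9 : Tendsto (fun n => b n - b 0) atTop (nhds 0) := by
      simpa [hb0eq] using hb0.sub_const (b 0)
    exact tendsto_nhds_unique h7 h9
  -- conclude
  have hfinal : (∫ x, (∑' k, f k x)) = 0 := by rw [← hswap, htsum]
  rw [← hfinal]
  apply integral_congr_ae (Filter.Eventually.of_forall fun x => ?_)
  rw [div_eq_mul_inv, ← tsum_mul_right]
  apply tsum_congr fun k => ?_
  rw [hf]
  simp [div_eq_mul_inv]
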